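/- Under the near point lighting model on the unit sphere, for a light source at position E ∉ S² outside the sphere and a lit point p (with ⟨N_p, E − X_p⟩ > 0), the intensity is B_p = e·cos γ_p / ‖E − X_p‖², where γ_p is the angle between the unit normal N_p and the lighting vector l_p = E − X_p, X_p the position of p, and e > 0 the lighting power. For two lit points p, q on the sphere: B_p = B_q if and only if γ_p = γ_q and ‖l_p‖ = ‖l_q‖. -/

import Mathlib

open Real InnerProductGeometry

private lemma npl_mono (e : ℝ) (he : 0 < e) (t1 t2 r1 r2 : ℝ)
    (h1 : 1 < t1) (ht : t1 < t2) (hr1 : 0 < r1) (hr2 : 0 < r2)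
    (hsq : r1 ^ 2 - r2 ^ 2 = 2 * (t2 - t1)) :
    e * (t1 - 1) / r1 ^ 3 < e * (t2 - 1) / r2 ^ 3 := by
  have hrr : r2 < r1 := by nlinarith
  have h3 : r2 ^ 3 < r1 ^ 3 := by nlinarith
  rw [div_lt_div_iff₀ (by positivity) (by positivity)]
  have ha : 0 < e * (t1 - 1) := by nlinarith
  nlinarith [mul_lt_mul_of_pos_right (by nlinarith : e * (t1 - 1) < e * (t2 - 1)) (by positivity : (0:ℝ) < r2 ^ 3), mul_lt_mul_of_pos_left h3 (by nlinarith : (0:ℝ) < e * (t2 - 1))]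

/-- Under the near point lighting model on the unit sphere
(light at `E` with `‖E‖ > 1`, power `e > 0`), two lit points have equal
intensity `B = e·cos γ / ‖E − X‖²` iff both their angles `γ` (between the
normal and the lighting vector `E − X`) and their distances to the light
source agree. -/
theorem stmt_9 (e : ℝ) (he : 0 < e)
    (E Xp Xq : EuclideanSpace ℝ (Fin 3))
    (hE : 1 < ‖E‖) (hXp : ‖Xp‖ = 1) (hXq : ‖Xq‖ = 1)
    (hlitp : 0 < (inner ℝ Xp (E - Xp) : ℝ)) (hlitq : 0 < (inner ℝ Xq (E - Xq) : ℝ))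
    (γp γq Bp Bq : ℝ)
    (hγp : γp = InnerProductGeometry.angle Xp (E - Xp))
    (hγq : γq = InnerProductGeometry.angle Xq (E - Xq))
    (hBp : Bp = e * Real.cos γp / ‖E - Xp‖ ^ 2)
    (hBq : Bq = e * Real.cos γq / ‖E - Xq‖ ^ 2) :
    Bp = Bq ↔ (γp = γq ∧ ‖E - Xp‖ = ‖E - Xq‖) := by
  set tp : ℝ := inner ℝ Xp E with htp
  set tq : ℝ := inner ℝ Xq E with htq
  have hip : (inner ℝ Xp (E - Xp) : ℝ) = tp - 1 := by
    rw [inner_sub_right, real_inner_self_eq_norm_sq, hXp]; ring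
  have hiq : (inner ℝ Xq (E - Xq) : ℝ) = tq - 1 := by
    rw [inner_sub_right, real_inner_self_eq_norm_sq, hXq]; ring
  have htp1 : 1 < tp := by rw [hip] at hlitp; linarith
  have htq1 : 1 < tq := by rw [hiq] at hlitq; linarith
  have hrp2 : ‖E - Xp‖ ^ 2 = ‖E‖ ^ 2 + 1 - 2 * tp := by
    rw [norm_sub_sq_real, hXp, real_inner_comm]; ring
  have hrq2 : ‖E - Xq‖ ^ 2 = ‖E‖ ^ 2 + 1 - 2 * tq := by
    rw [norm_sub_sq_real, hXq, real_inner_comm]; ring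
  have hEp : E - Xp ≠ 0 := by
    intro h; rw [h, inner_zero_right] at hlitp; exact lt_irrefl 0 hlitp
  have hEq : E - Xq ≠ 0 := by
    intro h; rw [h, inner_zero_right] at hlitq; exact lt_irrefl 0 hlitq
  have hrp : 0 < ‖E - Xp‖ := norm_pos_iff.mpr hEp
  have hrq : 0 < ‖E - Xq‖ := norm_pos_iff.mpr hEq
  have hcp : Real.cos γp = (tp - 1) / ‖E - Xp‖ := by
    rw [hγp, InnerProductGeometry.cos_angle, hip, hXp, one_mul]
  have hcq : Real.cos γq = (tq - 1) / ‖E - Xq‖ := by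
    rw [hγq, InnerProductGeometry.cos_angle, hiq, hXq, one_mul]
  have hBp' : Bp = e * (tp - 1) / ‖E - Xp‖ ^ 3 := by
    rw [hBp, hcp]; ring
  have hBq' : Bq = e * (tq - 1) / ‖E - Xq‖ ^ 3 := by
    rw [hBq, hcq]; ring
  constructor
  · intro hB
    have htpq : tp = tq := by
      rcases lt_trichotomy tp tq with h | h | h
      · exfalso
        have := npl_mono e he tp tq ‖E - Xp‖ ‖E - Xq‖ htp1 h hrp hrq (by rw [hrp2, hrq2]; ring)
        rw [← hBp', ← hBq'] at this; linarith [hB ▸ this]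
      · exact h
      · exfalso
        have := npl_mono e he tq tp ‖E - Xq‖ ‖E - Xp‖ htq1 h hrq hrp (by rw [hrp2, hrq2]; ring)
        rw [← hBp', ← hBq'] at this; linarith [hB ▸ this]
    have hr : ‖E - Xp‖ = ‖E - Xq‖ := by
      have : ‖E - Xp‖ ^ 2 = ‖E - Xq‖ ^ 2 := by rw [hrp2, hrq2, htpq]
      nlinarith
    refine ⟨?_, hr⟩
    have hcos : Real.cos γp = Real.cos γq := by rw [hcp, hcq, htpq, hr]
    have h1 : γp ∈ Set.Icc 0 π := by
      rw [hγp]; exact ⟨InnerProductGeometry.angle_nonneg _ _, InnerProductGeometry.angle_le_pi _ _⟩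
    have h2 : γq ∈ Set.Icc 0 π := by
      rw [hγq]; exact ⟨InnerProductGeometry.angle_nonneg _ _, InnerProductGeometry.angle_le_pi _ _⟩
    exact Real.injOn_cos h1 h2 hcos
  · rintro ⟨h1, h2⟩
    rw [hBp, hBq, h1, h2]
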